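/- Let s ∈ ℝ^m and z ∈ ℝ^n be time series, and let L ≤ U be real numbers with L ≤ z_j ≤ U for all j ∈ {1,…,n}. Then for every warping path P of order m×n, C_P(s,z) ≥ ∑_{i=1}^m pen(s_i; L, U); consequently, dtw(s,z)² ≥ ∑_{i=1}^m pen(s_i; L, U). -/

import Mathlib

/-- A warping path of order `m × n`: a finite sequence of pairs of positive
integers starting at `(1,1)`, ending at `(m,n)`, each step increasing the
coordinates by `(1,0)`, `(0,1)` or `(1,1)`. -/
structure WarpingPath (m n : ℕ) where
  len : ℕ
  len_pos : 0 < len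
  pt : ℕ → ℕ × ℕ
  first : pt 0 = (1, 1)
  last : pt (len - 1) = (m, n)
  step : ∀ t, t + 1 < len →
    pt (t + 1) = ((pt t).1 + 1, (pt t).2) ∨
    pt (t + 1) = ((pt t).1, (pt t).2 + 1) ∨
    pt (t + 1) = ((pt t).1 + 1, (pt t).2 + 1)

/-- The set of vertices `V(P)` of a warping path. -/
def WarpingPath.V {m n : ℕ} (P : WarpingPath m n) : Finset (ℕ × ℕ) :=
  (Finset.range P.len).image P.pt

/-- The cost `C_P(s, s') = ∑_{(i,j) ∈ V(P)} (s_i − s'_j)²` of a warping path. -/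
noncomputable def WarpingPath.cost {m n : ℕ} (P : WarpingPath m n) (s s' : ℕ → ℝ) : ℝ :=
  ∑ v ∈ P.V, (s v.1 - s' v.2) ^ 2

/-- The dtw-distance between a time series `s` of length `m` and a time series
`s'` of length `n`: the minimum over all warping paths `P` of order `m × n` of
`√(C_P(s, s'))`. -/
noncomputable def dtw (m n : ℕ) (s s' : ℕ → ℝ) : ℝ :=
  Real.sqrt (sInf {c : ℝ | ∃ P : WarpingPath m n, c = P.cost s s'})

/-- The penalty `pen(a; L, U)`: `(a − U)²` if `a > U`, `(L − a)²` if `a < L`,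
and `0` otherwise. -/
noncomputable def pen (L U a : ℝ) : ℝ :=
  if U < a then (a - U) ^ 2 else if a < L then (L - a) ^ 2 else 0

lemma pen_nonneg (L U a : ℝ) : 0 ≤ pen L U a := by
  unfold pen; split_ifs <;> positivity

lemma pen_le (L U a b : ℝ) (h1 : L ≤ b) (h2 : b ≤ U) : pen L U a ≤ (a - b) ^ 2 := by
  unfold pen; split_ifs with hA hB
  · nlinarith
  · nlinarith
  · positivity


theorem stmt5 (m n : ℕ) (hm : 1 ≤ m) (hn : 1 ≤ n) (s z : ℕ → ℝ)
    (L U : ℝ) (hLU : L ≤ U) (hz : ∀ j ∈ Finset.Icc 1 n, L ≤ z j ∧ z j ≤ U) :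
    (∀ P : WarpingPath m n, P.cost s z ≥ ∑ i ∈ Finset.Icc 1 m, pen L U (s i)) ∧
    (dtw m n s z) ^ 2 ≥ ∑ i ∈ Finset.Icc 1 m, pen L U (s i) := by
  have hpart1 : ∀ P : WarpingPath m n, P.cost s z ≥ ∑ i ∈ Finset.Icc 1 m, pen L U (s i) := by
    intro P
    -- monotonicity of coordinates along the path
    have mono : ∀ t k, t + k < P.len →
        (P.pt t).1 ≤ (P.pt (t + k)).1 ∧ (P.pt t).2 ≤ (P.pt (t + k)).2 := by
      intro t k
      induction k with
      | zero => intro _; exact ⟨le_rfl, le_rfl⟩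
      | succ k ih =>
        intro h
        obtain ⟨h1, h2⟩ := ih (by omega)
        have hs := P.step (t + k) (by omega)
        rw [show t + (k + 1) = (t + k) + 1 from rfl]
        rcases hs with h3 | h3 | h3 <;> rw [h3] <;> exact ⟨by simp; omega, by simp; omega⟩
    have hb : ∀ t, t < P.len →
        1 ≤ (P.pt t).1 ∧ (P.pt t).1 ≤ m ∧ 1 ≤ (P.pt t).2 ∧ (P.pt t).2 ≤ n := by
      intro t ht
      have h1 := mono 0 t (by omega)
      have h2 := mono t (P.len - 1 - t) (by omega)
      rw [show (0 : ℕ) + t = t from by omega, P.first] at h1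
      rw [show t + (P.len - 1 - t) = P.len - 1 from by omega, P.last] at h2
      simp only [Prod.fst, Prod.snd] at h1 h2
      exact ⟨h1.1, h2.1, h1.2, h2.2⟩
    -- every first coordinate in [1, m] is attained
    have hsurj : ∀ i, 1 ≤ i → i ≤ m → ∃ t, t < P.len ∧ (P.pt t).1 = i := by
      intro i hi1 him
      have hex : ∃ t, i ≤ (P.pt t).1 := ⟨P.len - 1, by rw [P.last]; exact him⟩
      have hspec : i ≤ (P.pt (Nat.find hex)).1 := Nat.find_spec hex
      have ht0 : Nat.find hex ≤ P.len - 1 :=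
        Nat.find_min' hex (by rw [P.last]; exact him)
      have hlen := P.len_pos
      have ht0len : Nat.find hex < P.len := by omega
      rcases Nat.eq_zero_or_pos (Nat.find hex) with h0 | h0
      · refine ⟨Nat.find hex, ht0len, ?_⟩
        rw [h0, P.first]
        rw [h0, P.first] at hspec
        simpa using (le_antisymm hspec hi1).symm
      · obtain ⟨k, hk⟩ := Nat.exists_eq_add_of_lt h0
        rw [show 0 + k + 1 = k + 1 from by omega] at hk
        have hmin : ¬ i ≤ (P.pt k).1 := Nat.find_min hex (by omega)
        have hs := P.step k (by omega)
        refine ⟨Nat.find hex, ht0len, ?_⟩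
        rw [hk] at hspec ⊢
        rcases hs with h3 | h3 | h3 <;> rw [h3] at hspec ⊢ <;> simp at hspec ⊢ <;> omega
    have key : ∀ i, ∃ v, i ∈ Finset.Icc 1 m →
        v ∈ P.V ∧ v.1 = i ∧ 1 ≤ v.2 ∧ v.2 ≤ n := by
      intro i
      by_cases hi : i ∈ Finset.Icc 1 m
      · simp only [Finset.mem_Icc] at hi
        obtain ⟨t, ht, hti⟩ := hsurj i hi.1 hi.2
        refine ⟨P.pt t, fun _ => ⟨?_, hti, (hb t ht).2.2.1, (hb t ht).2.2.2⟩⟩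
        exact Finset.mem_image_of_mem _ (Finset.mem_range.mpr ht)
      · exact ⟨(0, 0), fun h => absurd h hi⟩
    choose g hg using key
    calc ∑ i ∈ Finset.Icc 1 m, pen L U (s i)
        ≤ ∑ i ∈ Finset.Icc 1 m, (s (g i).1 - z (g i).2) ^ 2 := by
          refine Finset.sum_le_sum fun i hi => ?_
          obtain ⟨_, h1, h2, h3⟩ := hg i hi
          rw [h1]
          exact pen_le L U (s i) (z (g i).2) (hz _ (Finset.mem_Icc.mpr ⟨h2, h3⟩)).1
            (hz _ (Finset.mem_Icc.mpr ⟨h2, h3⟩)).2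
      _ = ∑ v ∈ (Finset.Icc 1 m).image g, (s v.1 - z v.2) ^ 2 := by
          rw [Finset.sum_image]
          intro a ha b hb hab
          have h1 := (hg a ha).2.1
          have h2 := (hg b hb).2.1
          rw [← h1, ← h2, hab]
      _ ≤ ∑ v ∈ P.V, (s v.1 - z v.2) ^ 2 := by
          refine Finset.sum_le_sum_of_subset_of_nonneg ?_ (fun _ _ _ => by positivity)
          intro v hv
          obtain ⟨i, hi, hgi⟩ := Finset.mem_image.mp hv
          exact hgi ▸ (hg i hi).1
      _ = P.cost s z := rfl
  refine ⟨hpart1, ?_⟩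
  -- a concrete warping path, to show the infimum is over a nonempty set
  have hP0 : ∃ P : WarpingPath m n, True := by
    refine ⟨⟨m + n - 1, by omega,
      fun t => if t < m then (t + 1, 1) else (m, t - m + 2), ?_, ?_, ?_⟩, trivial⟩
    · simp [show 0 < m from hm]
    · split_ifs with h <;> simp [Prod.ext_iff] <;> omega
    · intro t ht
      by_cases h1 : t + 1 < m
      · left; simp [show t < m from by omega, h1]
      · by_cases h2 : t < m
        · right; left; simp [h2, show ¬ t + 1 < m from h1, Prod.ext_iff]; omega
        · right; left; simp [h2, show ¬ t + 1 < m from h1, Prod.ext_iff]; omega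
  obtain ⟨P0, -⟩ := hP0
  have hne : Set.Nonempty {c : ℝ | ∃ P : WarpingPath m n, c = P.cost s z} :=
    ⟨P0.cost s z, P0, rfl⟩
  have hlb : ∀ c ∈ {c : ℝ | ∃ P : WarpingPath m n, c = P.cost s z},
      (∑ i ∈ Finset.Icc 1 m, pen L U (s i)) ≤ c := by
    rintro c ⟨P, rfl⟩; exact hpart1 P
  have hInf := le_csInf hne hlb
  have hBnn : 0 ≤ ∑ i ∈ Finset.Icc 1 m, pen L U (s i) :=
    Finset.sum_nonneg fun i _ => pen_nonneg L U (s i)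
  unfold dtw
  rw [Real.sq_sqrt (le_trans hBnn hInf)]
  exact hInf
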